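/- Let p be an odd prime. Then for any γ ∈ SL_2(Z), the lattice S is contained in γ^{-1} S(1/p) γ, which in turn is contained in p^{-1} S. -/
import Mathlib


private lemma mapQ_mul (A B : Matrix (Fin 2) (Fin 2) ℤ) :
    (A * B).map (Int.cast : ℤ → ℚ) = A.map Int.cast * B.map Int.cast :=
  Matrix.map_mul (f := Int.castRingHom ℚ)

private lemma mapQ_one :
    ((1 : Matrix (Fin 2) (Fin 2) ℤ)).map (Int.cast : ℤ → ℚ) = 1 := by
  ext i j
  simp [Matrix.map_apply, Matrix.one_apply, apply_ite (Int.cast : ℤ → ℚ)]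

/-- The lattice `R(C/B) ⊆ M₂(ℚ)`. -/

def Rlat (C B : ℕ) : Set (Matrix (Fin 2) (Fin 2) ℚ) :=
  {x | (∃ n : ℤ, x 0 0 = n) ∧ (∃ n : ℤ, x 1 1 = n) ∧
       (∃ n : ℤ, x 0 1 = (n : ℚ) / B) ∧ (∃ n : ℤ, x 1 0 = (C : ℚ) * n)}

/-- `S = ℤ + 2 M₂(ℤ)`, viewed inside `M₂(ℚ)`. -/
def Sset : Set (Matrix (Fin 2) (Fin 2) ℚ) :=
  {α | ∃ (m : ℤ) (γ : Matrix (Fin 2) (Fin 2) ℤ),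
    α = (m : ℚ) • (1 : Matrix (Fin 2) (Fin 2) ℚ) + (2 : ℚ) • γ.map (Int.cast : ℤ → ℚ)}

/-- `S(1/p) = ℤ + 2 R(1/p) ⊆ M₂(ℚ)`. -/
def SOneOverP (p : ℕ) : Set (Matrix (Fin 2) (Fin 2) ℚ) :=
  {α | ∃ (m : ℤ) (β : Matrix (Fin 2) (Fin 2) ℚ), β ∈ Rlat 1 p ∧
    α = (m : ℚ) • (1 : Matrix (Fin 2) (Fin 2) ℚ) + (2 : ℚ) • β}

/-- For `p` an odd prime and `γ ∈ SL₂(ℤ)`, one has `S ⊆ γ⁻¹ S(1/p) γ ⊆ p⁻¹ S`. -/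
theorem S_subset_conj_subset_pinv_S (p : ℕ) (hp : p.Prime) (hp2 : p ≠ 2)
    (γ : Matrix.SpecialLinearGroup (Fin 2) ℤ) :
    Sset ⊆ {α : Matrix (Fin 2) (Fin 2) ℚ | ∃ s ∈ SOneOverP p,
        α = ((γ⁻¹ : Matrix.SpecialLinearGroup (Fin 2) ℤ) :
              Matrix (Fin 2) (Fin 2) ℤ).map (Int.cast : ℤ → ℚ) * s *
            ((γ : Matrix (Fin 2) (Fin 2) ℤ).map (Int.cast : ℤ → ℚ))} ∧
    {α : Matrix (Fin 2) (Fin 2) ℚ | ∃ s ∈ SOneOverP p,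
        α = ((γ⁻¹ : Matrix.SpecialLinearGroup (Fin 2) ℤ) :
              Matrix (Fin 2) (Fin 2) ℤ).map (Int.cast : ℤ → ℚ) * s *
            ((γ : Matrix (Fin 2) (Fin 2) ℤ).map (Int.cast : ℤ → ℚ))} ⊆
      {α : Matrix (Fin 2) (Fin 2) ℚ | ∃ s ∈ Sset, α = ((p : ℚ))⁻¹ • s} := by
  have key : ((γ⁻¹ : Matrix.SpecialLinearGroup (Fin 2) ℤ) :
      Matrix (Fin 2) (Fin 2) ℤ) * (γ : Matrix (Fin 2) (Fin 2) ℤ) = 1 := by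
    rw [← Matrix.SpecialLinearGroup.coe_mul, inv_mul_cancel]
    rfl
  have key2 : (γ : Matrix (Fin 2) (Fin 2) ℤ) * ((γ⁻¹ : Matrix.SpecialLinearGroup (Fin 2) ℤ) :
      Matrix (Fin 2) (Fin 2) ℤ) = 1 := by
    rw [← Matrix.SpecialLinearGroup.coe_mul, mul_inv_cancel]
    rfl
  set g : Matrix (Fin 2) (Fin 2) ℚ := ((γ : Matrix (Fin 2) (Fin 2) ℤ).map (Int.cast : ℤ → ℚ))
    with hg
  set gi : Matrix (Fin 2) (Fin 2) ℚ := ((γ⁻¹ : Matrix.SpecialLinearGroup (Fin 2) ℤ) :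
      Matrix (Fin 2) (Fin 2) ℤ).map (Int.cast : ℤ → ℚ) with hgi
  have hgig : gi * g = 1 := by rw [hg, hgi, ← mapQ_mul, key, mapQ_one]
  have hggi : g * gi = 1 := by rw [hg, hgi, ← mapQ_mul, key2, mapQ_one]
  have hp0 : (p : ℚ) ≠ 0 := by exact_mod_cast hp.ne_zero
  constructor
  · rintro α ⟨m, c, rfl⟩
    set N : Matrix (Fin 2) (Fin 2) ℤ :=
      (γ : Matrix (Fin 2) (Fin 2) ℤ) * c * ((γ⁻¹ : Matrix.SpecialLinearGroup (Fin 2) ℤ) :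
        Matrix (Fin 2) (Fin 2) ℤ) with hN
    refine ⟨(m : ℚ) • (1 : Matrix (Fin 2) (Fin 2) ℚ) + (2 : ℚ) • N.map Int.cast,
      ⟨m, N.map Int.cast, ⟨⟨N 0 0, rfl⟩, ⟨N 1 1, rfl⟩, ⟨p * N 0 1, by
        rw [Matrix.map_apply]
        push_cast
        field_simp⟩, ⟨N 1 0, by
        simp [Matrix.map_apply]⟩⟩, rfl⟩, ?_⟩
    rw [mul_add, add_mul, Matrix.mul_smul, Matrix.smul_mul, Matrix.mul_smul, Matrix.smul_mul,
      mul_one, hgig]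
    congr 1
    rw [hN, mapQ_mul, mapQ_mul, hg, hgi]
    rw [show gi * (g * c.map Int.cast * gi) * g = (gi * g) * c.map Int.cast * (gi * g) by
      noncomm_ring, hgig, one_mul, mul_one]
  · rintro α ⟨s, ⟨m, β, ⟨⟨n00, h00⟩, ⟨n11, h11⟩, ⟨n01, h01⟩, ⟨n10, h10⟩⟩, rfl⟩, rfl⟩
    set B : Matrix (Fin 2) (Fin 2) ℤ := !![(p : ℤ) * n00, n01; (p : ℤ) * n10, (p : ℤ) * n11]
      with hB
    have hBmap : B.map (Int.cast : ℤ → ℚ) = (p : ℚ) • β := by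
      ext i j
      fin_cases i <;> fin_cases j <;>
        simp [hB, Matrix.map_apply, h00, h01, h10, h11] <;> push_cast <;>
        field_simp <;> ring
    refine ⟨(p : ℚ) • (gi * ((m : ℚ) • 1 + (2 : ℚ) • β) * g),
      ⟨p * m, ((γ⁻¹ : Matrix.SpecialLinearGroup (Fin 2) ℤ) : Matrix (Fin 2) (Fin 2) ℤ) * B *
        (γ : Matrix (Fin 2) (Fin 2) ℤ), ?_⟩, by rw [smul_smul, inv_mul_cancel₀ hp0, one_smul]⟩
    rw [mapQ_mul, mapQ_mul, ← hg, ← hgi, hBmap]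
    rw [mul_add, add_mul, smul_add, Matrix.mul_smul, Matrix.smul_mul, Matrix.mul_smul,
      Matrix.smul_mul, mul_one, hgig, Matrix.mul_smul, Matrix.smul_mul]
    push_cast
    module
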